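/- Any critical point x of φ_RS(·;μ,a) satisfies either x = 0 or q(x,μ,a) = 1 − 1/(μa). In particular, dφ_RS/dx = −μx + μ²ax(1 − q(x,μ,a)). -/

import Mathlib

open MeasureTheory ProbabilityTheory

noncomputable section

def rsRHS (μ a x q : ℝ) : ℝ :=
  ∫ p : ℝ × ℝ, Real.tanh (p.1 * Real.sqrt (μ * q) + μ * p.2 * x) ^ 2
    ∂((gaussianReal 0 1).prod (gaussianReal 0 a.toNNReal))

def phiRS (μ a : ℝ) (q : ℝ → ℝ) (x : ℝ) : ℝ :=
  -μ * x ^ 2 / 2 + μ * (1 - q x) ^ 2 / 4 +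
    ∫ p : ℝ × ℝ, Real.log (Real.cosh (p.1 * Real.sqrt (μ * q x) + μ * p.2 * x))
      ∂((gaussianReal 0 1).prod (gaussianReal 0 a.toNNReal))

open Real Filter
open scoped NNReal ENNReal Topology

lemma my_continuous_tanh : Continuous Real.tanh := by
  have : Real.tanh = fun x => Real.sinh x / Real.cosh x := funext Real.tanh_eq_sinh_div_cosh
  rw [this]
  exact Real.continuous_sinh.div Real.continuous_cosh fun x => (Real.cosh_pos x).ne'

lemma my_hasDerivAt_tanh (x : ℝ) : HasDerivAt Real.tanh (1 - Real.tanh x ^ 2) x := by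
  have h : HasDerivAt (fun y => Real.sinh y / Real.cosh y)
      ((Real.cosh x * Real.cosh x - Real.sinh x * Real.sinh x) / Real.cosh x ^ 2) x :=
    (Real.hasDerivAt_sinh x).div (Real.hasDerivAt_cosh x) (Real.cosh_pos x).ne'
  have heq : (Real.cosh x * Real.cosh x - Real.sinh x * Real.sinh x) / Real.cosh x ^ 2
      = 1 - Real.tanh x ^ 2 := by
    rw [Real.tanh_eq_sinh_div_cosh, div_pow, sub_div]
    have hc : Real.cosh x ^ 2 ≠ 0 := by positivity
    field_simp
  have ht : Real.tanh = fun y => Real.sinh y / Real.cosh y := funext Real.tanh_eq_sinh_div_cosh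
  rw [ht] at heq ⊢
  rw [← heq]
  exact h

lemma my_abs_tanh_le_one (x : ℝ) : |Real.tanh x| ≤ 1 := by
  rw [Real.tanh_eq_sinh_div_cosh, abs_div, abs_of_pos (Real.cosh_pos x),
    div_le_one (Real.cosh_pos x), abs_le]
  constructor
  · nlinarith [Real.cosh_add_sinh x, Real.exp_pos x]
  · nlinarith [Real.cosh_sub_sinh x, Real.exp_pos (-x)]

lemma my_tanh_sq_le_one (x : ℝ) : Real.tanh x ^ 2 ≤ 1 := by
  have := my_abs_tanh_le_one x
  nlinarith [abs_nonneg (Real.tanh x), sq_abs (Real.tanh x)]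

lemma my_abs_log_cosh_le (t : ℝ) : |Real.log (Real.cosh t)| ≤ |t| := by
  have h1 : 0 ≤ Real.log (Real.cosh t) := Real.log_nonneg (Real.one_le_cosh t)
  rw [abs_of_nonneg h1]
  have h2 : Real.cosh t ≤ Real.exp |t| := by
    rw [← Real.cosh_abs, Real.cosh_eq]
    have := Real.exp_le_exp.mpr (neg_abs_le t)
    have h3 : Real.exp (-|t|) ≤ Real.exp |t| := by
      apply Real.exp_le_exp.mpr; linarith [abs_nonneg t]
    linarith
  calc Real.log (Real.cosh t) ≤ Real.log (Real.exp |t|) :=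
        Real.log_le_log (Real.cosh_pos t) h2
    _ = |t| := Real.log_exp _

lemma my_hasDerivAt_logcosh (t : ℝ) :
    HasDerivAt (fun s => Real.log (Real.cosh s)) (Real.tanh t) t := by
  have := (Real.hasDerivAt_cosh t).log (Real.cosh_pos t).ne'
  simpa [Real.tanh_eq_sinh_div_cosh] using this

lemma my_pdf_eq (v : ℝ≥0) : gaussianPDFReal 0 v
    = fun z => (Real.sqrt (2 * π * v))⁻¹ * Real.exp (-(2*(v:ℝ))⁻¹ * z ^ 2) := by
  funext z
  rw [gaussianPDFReal]
  congr 1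
  rw [sub_zero, div_eq_mul_inv]
  ring_nf

lemma my_hasDerivAt_pdf (v : ℝ≥0) (hv : v ≠ 0) (z : ℝ) :
    HasDerivAt (gaussianPDFReal 0 v) (-(z / v) * gaussianPDFReal 0 v z) z := by
  have hv' : (0:ℝ) < v := NNReal.coe_pos.mpr (pos_iff_ne_zero.mpr hv)
  rw [my_pdf_eq]
  have h1 : HasDerivAt (fun y : ℝ => -(2*(v:ℝ))⁻¹ * y ^ 2) (-(2*(v:ℝ))⁻¹ * (2 * z)) z := by
    simpa using (hasDerivAt_pow 2 z).const_mul (-(2*(v:ℝ))⁻¹)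
  have h2 := (h1.exp).const_mul (Real.sqrt (2 * π * v))⁻¹
  convert h2 using 1
  · rfl
  · rfl
  field_simp

lemma my_integrable_abs_mul_pdf (v : ℝ≥0) (hv : v ≠ 0) :
    Integrable (fun z => |z| * gaussianPDFReal 0 v z) volume := by
  have hv' : (0:ℝ) < v := NNReal.coe_pos.mpr (pos_iff_ne_zero.mpr hv)
  have hb : (0:ℝ) < (2*(v:ℝ))⁻¹ := by positivity
  have base := (integrable_mul_exp_neg_mul_sq hb).abs
  have h2 := base.const_mul (Real.sqrt (2 * π * v))⁻¹
  refine h2.congr (ae_of_all _ fun z => ?_)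
  rw [my_pdf_eq]
  show (√(2 * π * v))⁻¹ * |z * rexp (-(2*(v:ℝ))⁻¹ * z ^ 2)|
      = |z| * ((√(2 * π * v))⁻¹ * rexp (-(2*(v:ℝ))⁻¹ * z ^ 2))
  rw [abs_mul, abs_of_pos (Real.exp_pos _)]
  ring

lemma my_gaussian_density (v : ℝ≥0) (hv : v ≠ 0) :
    gaussianReal 0 v = volume.withDensity (fun z => ((gaussianPDFReal 0 v z).toNNReal : ℝ≥0∞)) := by
  rw [gaussianReal_of_var_ne_zero 0 hv]
  rfl

lemma my_integral_gaussianReal (v : ℝ≥0) (hv : v ≠ 0) (g : ℝ → ℝ) :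
    ∫ z, g z ∂(gaussianReal 0 v) = ∫ z, g z * gaussianPDFReal 0 v z := by
  rw [my_gaussian_density v hv,
    integral_withDensity_eq_integral_smul ((measurable_gaussianPDFReal 0 v).real_toNNReal) g]
  congr 1
  funext z
  simp [NNReal.smul_def, Real.coe_toNNReal _ (gaussianPDFReal_nonneg 0 v z), mul_comm]

lemma my_integrable_gaussianReal_iff (v : ℝ≥0) (hv : v ≠ 0) (g : ℝ → ℝ) :
    Integrable g (gaussianReal 0 v) ↔ Integrable (fun z => g z * gaussianPDFReal 0 v z) volume := by
  rw [my_gaussian_density v hv,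
    integrable_withDensity_iff_integrable_smul ((measurable_gaussianPDFReal 0 v).real_toNNReal)]
  constructor <;> intro h <;> refine h.congr (ae_of_all _ fun z => ?_) <;>
    simp [NNReal.smul_def, Real.coe_toNNReal _ (gaussianPDFReal_nonneg 0 v z), mul_comm]

lemma my_integrable_abs_gauss (v : ℝ≥0) (hv : v ≠ 0) :
    Integrable (fun z => |z|) (gaussianReal 0 v) := by
  rw [my_integrable_gaussianReal_iff v hv]
  exact my_integrable_abs_mul_pdf v hv

lemma my_integrable_of_bounded {α : Type*} {mα : MeasurableSpace α} {m : Measure α}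
    [IsFiniteMeasure m] {f : α → ℝ} (hf : AEStronglyMeasurable f m) {C : ℝ}
    (h : ∀ x, |f x| ≤ C) : Integrable f m :=
  Integrable.mono' (integrable_const C) hf (ae_of_all _ h)

lemma my_abs_one_sub_tanh_sq_le_one (x : ℝ) : |1 - Real.tanh x ^ 2| ≤ 1 := by
  rw [abs_of_nonneg (by linarith [my_tanh_sq_le_one x])]
  nlinarith [sq_nonneg (Real.tanh x)]

lemma my_gauss_ibp (v : ℝ≥0) (hv : v ≠ 0) (u c : ℝ) :
    ∫ z, z * Real.tanh (z * u + c) ∂(gaussianReal 0 v)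
      = (v : ℝ) * (u * ∫ z, (1 - Real.tanh (z * u + c) ^ 2) ∂(gaussianReal 0 v)) := by
  have hv' : (0:ℝ) < v := NNReal.coe_pos.mpr (pos_iff_ne_zero.mpr hv)
  set φ : ℝ → ℝ := gaussianPDFReal 0 v with hφdef
  set f : ℝ → ℝ := fun z => Real.tanh (z * u + c) with hfdef
  have hfc : Continuous f := my_continuous_tanh.comp (by continuity)
  have hfd : ∀ z, HasDerivAt f (u * (1 - f z ^ 2)) z := by
    intro z
    have h1 : HasDerivAt (fun y : ℝ => y * u + c) u z := by
      simpa using ((hasDerivAt_id z).mul_const u).add_const c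
    have h2 := (my_hasDerivAt_tanh (z * u + c)).comp z h1
    have h3 : HasDerivAt f ((1 - Real.tanh (z * u + c) ^ 2) * u) z := h2
    have h4 : u * (1 - f z ^ 2) = (1 - Real.tanh (z * u + c) ^ 2) * u := by
      show u * (1 - Real.tanh (z * u + c) ^ 2) = _
      ring
    rw [h4]
    exact h3
  have hφint : Integrable φ volume := integrable_gaussianPDFReal 0 v
  have hφc : Continuous φ := by rw [hφdef, my_pdf_eq]; continuity
  have hφnn : ∀ z, 0 ≤ φ z := gaussianPDFReal_nonneg 0 v
  have habs : Integrable (fun z => |z| * φ z) volume := my_integrable_abs_mul_pdf v hv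
  have hAc : Continuous (fun z => u * (1 - f z ^ 2) * φ z) := by
    apply Continuous.mul _ hφc
    exact Continuous.mul continuous_const (Continuous.sub continuous_const (hfc.pow 2))
  have hBc : Continuous (fun z => f z * (-(z / (v:ℝ)) * φ z)) := by
    apply hfc.mul
    exact ((continuous_id.div_const _).neg).mul hφc
  have hAint : Integrable (fun z => u * (1 - f z ^ 2) * φ z) volume := by
    refine (hφint.const_mul (|u|)).mono' hAc.aestronglyMeasurable (ae_of_all _ fun z => ?_)
    rw [Real.norm_eq_abs, abs_mul, abs_mul, abs_of_nonneg (hφnn z)]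
    have := my_abs_one_sub_tanh_sq_le_one (z * u + c)
    calc |u| * |1 - f z ^ 2| * φ z ≤ |u| * 1 * φ z := by
          apply mul_le_mul_of_nonneg_right _ (hφnn z)
          exact mul_le_mul_of_nonneg_left this (abs_nonneg u)
      _ = |u| * φ z := by ring
  have hBint : Integrable (fun z => f z * (-(z / (v:ℝ)) * φ z)) volume := by
    refine (habs.const_mul ((v:ℝ)⁻¹)).mono' hBc.aestronglyMeasurable (ae_of_all _ fun z => ?_)
    rw [Real.norm_eq_abs, abs_mul, abs_mul, abs_neg, abs_div, abs_of_nonneg (hφnn z),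
      abs_of_pos hv']
    calc |f z| * (|z| / v * φ z) ≤ 1 * (|z| / v * φ z) := by
          apply mul_le_mul_of_nonneg_right (my_abs_tanh_le_one _)
          exact mul_nonneg (by positivity) (hφnn z)
      _ = (v:ℝ)⁻¹ * (|z| * φ z) := by rw [div_eq_mul_inv]; ring
  have hsum : Integrable (fun z => u * (1 - f z ^ 2) * φ z + f z * (-(z / (v:ℝ)) * φ z))
      volume := hAint.add hBint
  have hΦd : ∀ z, HasDerivAt (fun y => f y * φ y)
      (u * (1 - f z ^ 2) * φ z + f z * (-(z / v) * φ z)) z :=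
    fun z => (hfd z).mul (my_hasDerivAt_pdf v hv z)
  -- tendsto to zero at ±∞
  have hφ0top : Tendsto φ atTop (𝓝 0) := by
    rw [hφdef, my_pdf_eq]
    have h1 : Tendsto (fun z : ℝ => (2*(v:ℝ))⁻¹ * z ^ 2) atTop atTop := by
      apply Tendsto.const_mul_atTop (by positivity)
      exact tendsto_pow_atTop two_ne_zero
    have h2 : Tendsto (fun z : ℝ => -(2*(v:ℝ))⁻¹ * z ^ 2) atTop atBot := by
      refine (tendsto_neg_atTop_atBot.comp h1).congr fun z => ?_
      simp only [Function.comp_apply]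
      ring
    have h3 := Real.tendsto_exp_atBot.comp h2
    have h4 := h3.const_mul (Real.sqrt (2 * π * v))⁻¹
    simpa using h4
  have hφsymm : ∀ z : ℝ, φ (-z) = φ z := by
    intro z; rw [hφdef, my_pdf_eq]; simp [neg_sq]
  have hφ0bot : Tendsto φ atBot (𝓝 0) := by
    have := hφ0top.comp tendsto_neg_atBot_atTop
    refine this.congr fun z => ?_
    simp only [Function.comp_apply, hφsymm]
  have hnorm : ∀ z, ‖f z * φ z‖ ≤ φ z := by
    intro z
    rw [Real.norm_eq_abs, abs_mul, abs_of_nonneg (hφnn z)]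
    calc |f z| * φ z ≤ 1 * φ z := mul_le_mul_of_nonneg_right (my_abs_tanh_le_one _) (hφnn z)
      _ = φ z := one_mul _
  have hΦtop : Tendsto (fun y => f y * φ y) atTop (𝓝 0) := squeeze_zero_norm hnorm hφ0top
  have hΦbot : Tendsto (fun y => f y * φ y) atBot (𝓝 0) := squeeze_zero_norm hnorm hφ0bot
  have key : (∫ z, (u * (1 - f z ^ 2) * φ z + f z * (-(z / (v:ℝ)) * φ z))) = 0 := by
    have h1 : Tendsto (fun T : ℝ => ∫ z in (-T)..T,
        (u * (1 - f z ^ 2) * φ z + f z * (-(z / (v:ℝ)) * φ z))) atTop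
        (𝓝 (∫ z, (u * (1 - f z ^ 2) * φ z + f z * (-(z / (v:ℝ)) * φ z)))) :=
      intervalIntegral_tendsto_integral hsum tendsto_neg_atTop_atBot tendsto_id
    have h2 : ∀ T : ℝ, (∫ z in (-T)..T,
        (u * (1 - f z ^ 2) * φ z + f z * (-(z / (v:ℝ)) * φ z)))
        = f T * φ T - f (-T) * φ (-T) := fun T =>
      intervalIntegral.integral_eq_sub_of_hasDerivAt (fun z _ => hΦd z)
        hsum.intervalIntegrable
    have h3 : Tendsto (fun T : ℝ => f T * φ T - f (-T) * φ (-T)) atTop (𝓝 (0 - 0)) :=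
      hΦtop.sub (hΦbot.comp tendsto_neg_atTop_atBot)
    rw [sub_zero] at h3
    exact tendsto_nhds_unique ((h1.congr fun T => (h2 T))) h3
  rw [integral_add hAint hBint] at key
  have hZint : Integrable (fun z => z * f z * φ z) volume := by
    have hc : Continuous (fun z => z * f z * φ z) := (continuous_id.mul hfc).mul hφc
    refine habs.mono' hc.aestronglyMeasurable (ae_of_all _ fun z => ?_)
    rw [Real.norm_eq_abs, abs_mul, abs_mul, abs_of_nonneg (hφnn z)]
    calc |z| * |f z| * φ z ≤ |z| * 1 * φ z := by
          apply mul_le_mul_of_nonneg_right _ (hφnn z)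
          exact mul_le_mul_of_nonneg_left (my_abs_tanh_le_one _) (abs_nonneg z)
      _ = |z| * φ z := by ring
  have hBeq : (∫ z, f z * (-(z / (v:ℝ)) * φ z)) = -((v:ℝ)⁻¹ * ∫ z, z * f z * φ z) := by
    have : (fun z => f z * (-(z / (v:ℝ)) * φ z)) = fun z => -((v:ℝ)⁻¹) * (z * f z * φ z) := by
      funext z; rw [div_eq_mul_inv]; ring
    rw [this, integral_const_mul]
    ring
  have hAeq : (∫ z, u * (1 - f z ^ 2) * φ z) = u * ∫ z, (1 - f z ^ 2) * φ z := by
    have : (fun z => u * (1 - f z ^ 2) * φ z) = fun z => u * ((1 - f z ^ 2) * φ z) := by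
      funext z; ring
    rw [this, integral_const_mul]
  rw [hAeq, hBeq] at key
  rw [my_integral_gaussianReal v hv, my_integral_gaussianReal v hv]
  have hkey2 : (∫ z, z * f z * φ z) = (v:ℝ) * (u * ∫ z, (1 - f z ^ 2) * φ z) := by
    have h5 : (v:ℝ)⁻¹ * (∫ z, z * f z * φ z) = u * ∫ z, (1 - f z ^ 2) * φ z := by linarith
    calc (∫ z, z * f z * φ z) = (v:ℝ) * ((v:ℝ)⁻¹ * ∫ z, z * f z * φ z) := by
          rw [← mul_assoc, mul_inv_cancel₀ hv'.ne', one_mul]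
      _ = (v:ℝ) * (u * ∫ z, (1 - f z ^ 2) * φ z) := by rw [h5]
  exact hkey2

-- product-measure integrability helpers
lemma my_int_fst {m1 m2 : Measure ℝ} [SFinite m2] [IsProbabilityMeasure m2] {f : ℝ → ℝ}
    (hf : Integrable f m1) : Integrable (fun p : ℝ × ℝ => f p.1) (m1.prod m2) := by
  have h1 : (m1.prod m2).map Prod.fst = m1 := Measure.fst_prod
  rw [← h1] at hf
  exact (integrable_map_measure hf.aestronglyMeasurable measurable_fst.aemeasurable).mp hf

lemma my_int_snd {m1 m2 : Measure ℝ} [SFinite m2] [IsProbabilityMeasure m1] {f : ℝ → ℝ}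
    (hf : Integrable f m2) : Integrable (fun p : ℝ × ℝ => f p.2) (m1.prod m2) := by
  have h1 : (m1.prod m2).map Prod.snd = m2 := Measure.snd_prod
  rw [← h1] at hf
  exact (integrable_map_measure hf.aestronglyMeasurable measurable_snd.aemeasurable).mp hf

section CLM

/-- the linear map `y ↦ p.1 * y.1 + p.2 * y.2` -/
def L0 (p : ℝ × ℝ) : ℝ × ℝ →L[ℝ] ℝ :=
  p.1 • ContinuousLinearMap.fst ℝ ℝ ℝ + p.2 • ContinuousLinearMap.snd ℝ ℝ ℝ

lemma my_L0_apply (p y : ℝ × ℝ) : (L0 p) y = p.1 * y.1 + p.2 * y.2 := by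
  simp [L0, smul_eq_mul]

lemma my_L0_norm_le (p : ℝ × ℝ) : ‖L0 p‖ ≤ |p.1| + |p.2| := by
  refine (norm_add_le _ _).trans ?_
  rw [norm_smul p.1 (ContinuousLinearMap.fst ℝ ℝ ℝ), norm_smul p.2 (ContinuousLinearMap.snd ℝ ℝ ℝ)]
  have h1 : ‖ContinuousLinearMap.fst ℝ ℝ ℝ‖ ≤ 1 :=
    ContinuousLinearMap.opNorm_le_bound _ zero_le_one fun y => by
      simpa using (norm_fst_le y).trans (by simp [one_mul])
  have h2 : ‖ContinuousLinearMap.snd ℝ ℝ ℝ‖ ≤ 1 :=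
    ContinuousLinearMap.opNorm_le_bound _ zero_le_one fun y => by
      simpa using (norm_snd_le y).trans (by simp [one_mul])
  have := abs_nonneg p.1
  have := abs_nonneg p.2
  calc ‖p.1‖ * ‖ContinuousLinearMap.fst ℝ ℝ ℝ‖ + ‖p.2‖ * ‖ContinuousLinearMap.snd ℝ ℝ ℝ‖
      ≤ ‖p.1‖ * 1 + ‖p.2‖ * 1 := by
        gcongr
    _ = |p.1| + |p.2| := by simp [Real.norm_eq_abs]

lemma my_L0_continuous : Continuous L0 := by
  apply Continuous.add
  · exact continuous_fst.smul continuous_const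
  · exact continuous_snd.smul continuous_const

end CLM

set_option maxHeartbeats 2000000 in
/-- Derivative formula for `φ_RS` and characterization of its critical points:
`dφ_RS/dx = -μx + μ²a x (1 - q(x))`, so any critical point satisfies
`x = 0` or `q(x) = 1 - 1/(μ a)`. -/
theorem phiRS_critical_points
    (μ a : ℝ) (hμ : 0 < μ) (ha : 0 < a) (q : ℝ → ℝ)
    (hqdiff : Differentiable ℝ q)
    (hq : ∀ x, q x ∈ Set.Ioc (0 : ℝ) 1 ∧ q x = rsRHS μ a x (q x)) :
    ∀ x : ℝ,
      deriv (phiRS μ a q) x = -μ * x + μ ^ 2 * a * x * (1 - q x) ∧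
      (deriv (phiRS μ a q) x = 0 → x = 0 ∨ q x = 1 - 1 / (μ * a)) := by
  have hane : a.toNNReal ≠ 0 := by
    simp only [ne_eq, Real.toNNReal_eq_zero, not_le]
    exact ha
  have hacoe : ((a.toNNReal : ℝ≥0) : ℝ) = a := Real.coe_toNNReal a ha.le
  set γ1 : Measure ℝ := gaussianReal 0 1 with hγ1
  set γa : Measure ℝ := gaussianReal 0 a.toNNReal with hγa
  set P : Measure (ℝ × ℝ) := γ1.prod γa with hP
  have habs1 : Integrable (fun p : ℝ × ℝ => |p.1|) P :=
    my_int_fst (my_integrable_abs_gauss 1 one_ne_zero)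
  have habs2 : Integrable (fun p : ℝ × ℝ => |p.2|) P :=
    my_int_snd (my_integrable_abs_gauss a.toNNReal hane)
  have hboundInt : Integrable (fun p : ℝ × ℝ => |p.1| + |p.2|) P := habs1.add habs2
  -- the two-variable integral function
  set Hf : ℝ × ℝ → ℝ := fun w => ∫ p : ℝ × ℝ, Real.log (Real.cosh (p.1 * w.1 + p.2 * w.2)) ∂P
    with hHfdef
  -- derivative of Hf
  have hTcont : ∀ w : ℝ × ℝ, Continuous (fun p : ℝ × ℝ => Real.tanh (p.1 * w.1 + p.2 * w.2)) :=
    fun w => my_continuous_tanh.comp (by continuity)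
  have hF'cont : ∀ w : ℝ × ℝ,
      Continuous (fun p : ℝ × ℝ => Real.tanh (p.1 * w.1 + p.2 * w.2) • L0 p) :=
    fun w => (hTcont w).smul my_L0_continuous
  have hF'norm : ∀ (w p : ℝ × ℝ), ‖Real.tanh (p.1 * w.1 + p.2 * w.2) • L0 p‖ ≤ |p.1| + |p.2| := by
    intro w p
    rw [norm_smul (Real.tanh (p.1 * w.1 + p.2 * w.2)) (L0 p)]
    calc ‖Real.tanh (p.1 * w.1 + p.2 * w.2)‖ * ‖L0 p‖ ≤ 1 * (|p.1| + |p.2|) := by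
          apply mul_le_mul (my_abs_tanh_le_one _) (my_L0_norm_le p) (norm_nonneg _) zero_le_one
      _ = |p.1| + |p.2| := one_mul _
  have hF'int : ∀ w : ℝ × ℝ,
      Integrable (fun p : ℝ × ℝ => Real.tanh (p.1 * w.1 + p.2 * w.2) • L0 p) P := by
    intro w
    refine hboundInt.mono' (hF'cont w).aestronglyMeasurable (ae_of_all _ fun p => hF'norm w p)
  have hFint : ∀ w : ℝ × ℝ,
      Integrable (fun p : ℝ × ℝ => Real.log (Real.cosh (p.1 * w.1 + p.2 * w.2))) P := by
    intro w
    have hmeas : Continuous (fun p : ℝ × ℝ => Real.log (Real.cosh (p.1 * w.1 + p.2 * w.2))) := by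
      apply Continuous.log
      · exact Real.continuous_cosh.comp (by continuity)
      · exact fun p => (Real.cosh_pos _).ne'
    refine ((habs1.const_mul |w.1|).add (habs2.const_mul |w.2|)).mono'
      hmeas.aestronglyMeasurable (ae_of_all _ fun p => ?_)
    calc ‖Real.log (Real.cosh (p.1 * w.1 + p.2 * w.2))‖ ≤ |p.1 * w.1 + p.2 * w.2| :=
          my_abs_log_cosh_le _
      _ ≤ |p.1 * w.1| + |p.2 * w.2| := abs_add_le _ _
      _ = |w.1| * |p.1| + |w.2| * |p.2| := by rw [abs_mul, abs_mul]; ring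
  have hHfderiv : ∀ u' s' : ℝ, HasFDerivAt Hf
      (∫ p : ℝ × ℝ, Real.tanh (p.1 * u' + p.2 * s') • L0 p ∂P) (u', s') := by
    intro u' s'
    have hw₀ : Integrable
        (fun p : ℝ × ℝ => Real.log (Real.cosh (p.1 * u' + p.2 * s'))) P := hFint (u', s')
    have hw₁ : AEStronglyMeasurable
        (fun p : ℝ × ℝ => Real.tanh (p.1 * u' + p.2 * s') • L0 p) P :=
      (hF'int (u', s')).aestronglyMeasurable
    have hmeas : ∀ᶠ w in 𝓝 ((u', s') : ℝ × ℝ), AEStronglyMeasurable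
        (fun p : ℝ × ℝ => Real.log (Real.cosh (p.1 * w.1 + p.2 * w.2))) P :=
      Eventually.of_forall fun w => (hFint w).aestronglyMeasurable
    have hbnd : ∀ᵐ p ∂P, ∀ w ∈ Metric.ball ((u', s') : ℝ × ℝ) 1,
        ‖Real.tanh (p.1 * w.1 + p.2 * w.2) • L0 p‖ ≤ |p.1| + |p.2| :=
      ae_of_all _ fun p w _ => hF'norm w p
    have hdiff : ∀ᵐ p ∂P, ∀ w ∈ Metric.ball ((u', s') : ℝ × ℝ) 1,
        HasFDerivAt (fun w : ℝ × ℝ => Real.log (Real.cosh (p.1 * w.1 + p.2 * w.2)))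
          (Real.tanh (p.1 * w.1 + p.2 * w.2) • L0 p) w := by
      refine ae_of_all _ fun p w _ => ?_
      have h1 : HasFDerivAt (fun w : ℝ × ℝ => Real.log (Real.cosh ((L0 p) w)))
          (Real.tanh ((L0 p) w) • L0 p) w :=
        (my_hasDerivAt_logcosh ((L0 p) w)).comp_hasFDerivAt w (L0 p).hasFDerivAt
      have heqf : (fun w : ℝ × ℝ => Real.log (Real.cosh (p.1 * w.1 + p.2 * w.2)))
          = fun w : ℝ × ℝ => Real.log (Real.cosh ((L0 p) w)) := by
        funext w; rw [my_L0_apply]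
      have h2 : Real.tanh (p.1 * w.1 + p.2 * w.2) • L0 p = Real.tanh ((L0 p) w) • L0 p := by
        rw [my_L0_apply]
      rw [heqf, h2]
      exact h1
    have hmain := hasFDerivAt_integral_of_dominated_of_fderiv_le (𝕜 := ℝ) (μ := P)
      (x₀ := ((u', s') : ℝ × ℝ)) (s := Metric.ball ((u', s') : ℝ × ℝ) 1)
      (F := fun (w : ℝ × ℝ) (p : ℝ × ℝ) => Real.log (Real.cosh (p.1 * w.1 + p.2 * w.2)))
      (F' := fun (w : ℝ × ℝ) (p : ℝ × ℝ) => Real.tanh (p.1 * w.1 + p.2 * w.2) • L0 p)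
      (bound := fun p => |p.1| + |p.2|) (Metric.ball_mem_nhds _ one_pos) hmeas hw₀ hw₁ hbnd hboundInt hdiff
    exact hmain
  intro x
  have hqpos : 0 < q x := (hq x).1.1
  have hqle : q x ≤ 1 := (hq x).1.2
  have hμq : 0 < μ * q x := mul_pos hμ hqpos
  set u : ℝ := Real.sqrt (μ * q x) with hudef
  have hupos : 0 < u := Real.sqrt_pos.mpr hμq
  set s : ℝ := μ * x with hsdef
  -- the integrals over P at the point w₀ = (u, s)
  set T : ℝ × ℝ → ℝ := fun p => Real.tanh (p.1 * u + p.2 * s) with hTdef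
  have hTc : Continuous T := hTcont (u, s)
  have hint1 : Integrable (fun p : ℝ × ℝ => p.1 * T p) P := by
    refine habs1.mono' ((continuous_fst.mul hTc).aestronglyMeasurable) (ae_of_all _ fun p => ?_)
    rw [Real.norm_eq_abs, abs_mul]
    calc |p.1| * |T p| ≤ |p.1| * 1 := mul_le_mul_of_nonneg_left (my_abs_tanh_le_one _)
          (abs_nonneg _)
      _ = |p.1| := mul_one _
  have hint2 : Integrable (fun p : ℝ × ℝ => p.2 * T p) P := by
    refine habs2.mono' ((continuous_snd.mul hTc).aestronglyMeasurable) (ae_of_all _ fun p => ?_)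
    rw [Real.norm_eq_abs, abs_mul]
    calc |p.2| * |T p| ≤ |p.2| * 1 := mul_le_mul_of_nonneg_left (my_abs_tanh_le_one _)
          (abs_nonneg _)
      _ = |p.2| := mul_one _
  have hint3 : Integrable (fun p : ℝ × ℝ => 1 - T p ^ 2) P :=
    my_integrable_of_bounded ((continuous_const.sub (hTc.pow 2)).aestronglyMeasurable)
      (fun p => my_abs_one_sub_tanh_sq_le_one _)
  have hint4 : Integrable (fun p : ℝ × ℝ => T p ^ 2) P :=
    my_integrable_of_bounded ((hTc.pow 2).aestronglyMeasurable)
      (fun p => by rw [abs_of_nonneg (sq_nonneg _)]; exact my_tanh_sq_le_one _)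
  have hPuniv : (∫ _ : ℝ × ℝ, (1:ℝ) ∂P) = 1 := by simp
  have hsub : (∫ p : ℝ × ℝ, (1 - T p ^ 2) ∂P) = 1 - ∫ p : ℝ × ℝ, T p ^ 2 ∂P := by
    rw [integral_sub (integrable_const 1) hint4, hPuniv]
  -- Gaussian IBP in the first coordinate
  have hA : (∫ p : ℝ × ℝ, p.1 * T p ∂P) = u * ∫ p : ℝ × ℝ, (1 - T p ^ 2) ∂P := by
    rw [integral_prod_symm _ hint1]
    have hinner : ∀ ξ : ℝ, (∫ z : ℝ, z * Real.tanh (z * u + ξ * s) ∂γ1)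
        = u * ∫ z : ℝ, (1 - Real.tanh (z * u + ξ * s) ^ 2) ∂γ1 := by
      intro ξ
      have := my_gauss_ibp 1 one_ne_zero u (ξ * s)
      simpa using this
    calc (∫ ξ : ℝ, ∫ z : ℝ, z * T (z, ξ) ∂γ1 ∂γa)
        = ∫ ξ : ℝ, u * ∫ z : ℝ, (1 - T (z, ξ) ^ 2) ∂γ1 ∂γa := by
          refine integral_congr_ae (ae_of_all _ fun ξ => ?_)
          exact hinner ξ
      _ = u * ∫ ξ : ℝ, ∫ z : ℝ, (1 - T (z, ξ) ^ 2) ∂γ1 ∂γa := integral_const_mul _ _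
      _ = u * ∫ p : ℝ × ℝ, (1 - T p ^ 2) ∂P := by rw [← integral_prod_symm _ hint3]
  -- Gaussian IBP in the second coordinate
  have hB : (∫ p : ℝ × ℝ, p.2 * T p ∂P) = a * s * ∫ p : ℝ × ℝ, (1 - T p ^ 2) ∂P := by
    rw [integral_prod _ hint2]
    have hinner : ∀ z : ℝ, (∫ ξ : ℝ, ξ * Real.tanh (z * u + ξ * s) ∂γa)
        = a * (s * ∫ ξ : ℝ, (1 - Real.tanh (z * u + ξ * s) ^ 2) ∂γa) := by
      intro z
      have h0 := my_gauss_ibp a.toNNReal hane s (z * u)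
      rw [hacoe] at h0
      have he : ∀ ξ : ℝ, ξ * s + z * u = z * u + ξ * s := fun ξ => by ring
      simp only [he] at h0
      exact h0
    calc (∫ z : ℝ, ∫ ξ : ℝ, ξ * T (z, ξ) ∂γa ∂γ1)
        = ∫ z : ℝ, a * (s * ∫ ξ : ℝ, (1 - T (z, ξ) ^ 2) ∂γa) ∂γ1 := by
          refine integral_congr_ae (ae_of_all _ fun z => ?_)
          exact hinner z
      _ = a * s * ∫ z : ℝ, ∫ ξ : ℝ, (1 - T (z, ξ) ^ 2) ∂γa ∂γ1 := by
          rw [← integral_const_mul]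
          congr 1
          funext z
          ring
      _ = a * s * ∫ p : ℝ × ℝ, (1 - T p ^ 2) ∂P := by rw [← integral_prod _ hint3]
  -- consistency: ∫ T² = q x
  have hTQ : (∫ p : ℝ × ℝ, T p ^ 2 ∂P) = q x := by
    have h0 := (hq x).2
    rw [rsRHS] at h0
    have he : ∀ p : ℝ × ℝ, p.1 * Real.sqrt (μ * q x) + μ * p.2 * x = p.1 * u + p.2 * s :=
      fun p => by rw [hudef, hsdef]; ring
    rw [h0]
    refine integral_congr_ae (ae_of_all _ fun p => ?_)
    show T p ^ 2 = Real.tanh (p.1 * Real.sqrt (μ * q x) + μ * p.2 * x) ^ 2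
    rw [he p]
  have hQint : (∫ p : ℝ × ℝ, (1 - T p ^ 2) ∂P) = 1 - q x := by rw [hsub, hTQ]
  -- evaluation of the derivative CLM
  have heval : ∀ y : ℝ × ℝ,
      (∫ p : ℝ × ℝ, Real.tanh (p.1 * u + p.2 * s) • L0 p ∂P) y
        = y.1 * (u * (1 - q x)) + y.2 * (a * s * (1 - q x)) := by
    intro y
    have hF'int' : Integrable (fun p : ℝ × ℝ => Real.tanh (p.1 * u + p.2 * s) • L0 p) P :=
      hF'int (u, s)
    rw [ContinuousLinearMap.integral_apply hF'int' y]
    have h1 : ∀ p : ℝ × ℝ, (Real.tanh (p.1 * u + p.2 * s) • L0 p) y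
        = y.1 * (p.1 * T p) + y.2 * (p.2 * T p) := by
      intro p
      rw [ContinuousLinearMap.smul_apply, my_L0_apply, smul_eq_mul]
      show _ = y.1 * (p.1 * Real.tanh (p.1 * u + p.2 * s)) + y.2 * (p.2 * Real.tanh (p.1 * u + p.2 * s))
      ring
    calc (∫ p : ℝ × ℝ, (Real.tanh (p.1 * u + p.2 * s) • L0 p) y ∂P)
        = ∫ p : ℝ × ℝ, (y.1 * (p.1 * T p) + y.2 * (p.2 * T p)) ∂P :=
          integral_congr_ae (ae_of_all _ fun p => h1 p)
      _ = y.1 * ∫ p : ℝ × ℝ, p.1 * T p ∂P + y.2 * ∫ p : ℝ × ℝ, p.2 * T p ∂P := by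
          rw [integral_add (hint1.const_mul _) (hint2.const_mul _), integral_const_mul,
            integral_const_mul]
      _ = y.1 * (u * (1 - q x)) + y.2 * (a * s * (1 - q x)) := by
          rw [hA, hB, hQint]
  -- curve and chain rule
  set du : ℝ := μ * deriv q x / (2 * u) with hdudef
  have hgd : HasDerivAt (fun y => Real.sqrt (μ * q y)) du x := by
    have h1 : HasDerivAt (fun y => μ * q y) (μ * deriv q x) x :=
      ((hqdiff x).hasDerivAt).const_mul μ
    exact h1.sqrt hμq.ne'
  have hcurve : HasDerivAt (fun y => (Real.sqrt (μ * q y), μ * y)) ((du, μ)) x := by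
    refine hgd.prodMk ?_
    simpa using (hasDerivAt_id x).const_mul μ
  have hHc : HasDerivAt (fun y => Hf (Real.sqrt (μ * q y), μ * y))
      (du * (u * (1 - q x)) + μ * (a * s * (1 - q x))) x := by
    have h0 := (hHfderiv u s).comp_hasDerivAt x hcurve
    rw [heval (du, μ)] at h0
    exact h0
  -- phiRS as a sum
  have hphi : phiRS μ a q = fun y => -μ * y ^ 2 / 2 + μ * (1 - q y) ^ 2 / 4
      + Hf (Real.sqrt (μ * q y), μ * y) := by
    funext y
    rw [phiRS]
    congr 1
    have he : ∀ p : ℝ × ℝ, p.1 * Real.sqrt (μ * q y) + μ * p.2 * y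
        = p.1 * Real.sqrt (μ * q y) + p.2 * (μ * y) := fun p => by ring
    refine integral_congr_ae (ae_of_all _ fun p => ?_)
    show Real.log (Real.cosh (p.1 * Real.sqrt (μ * q y) + μ * p.2 * y))
        = Real.log (Real.cosh (p.1 * Real.sqrt (μ * q y) + p.2 * (μ * y)))
    rw [he p]
  have h₁ : HasDerivAt (fun y : ℝ => -μ * y ^ 2 / 2) (-μ * ((2:ℕ) * x ^ (2 - 1)) / 2) x :=
    ((hasDerivAt_pow 2 x).const_mul (-μ)).div_const 2
  have hin : HasDerivAt (fun y => 1 - q y) (-deriv q x) x :=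
    ((hqdiff x).hasDerivAt).const_sub 1
  have h₂ : HasDerivAt (fun y : ℝ => μ * (1 - q y) ^ 2 / 4)
      (μ * ((2:ℕ) * (1 - q x) ^ (2 - 1) * -deriv q x) / 4) x :=
    ((hin.pow 2).const_mul μ).div_const 4
  have htotal : HasDerivAt (phiRS μ a q)
      ((-μ * ((2:ℕ) * x ^ (2 - 1)) / 2 + μ * ((2:ℕ) * (1 - q x) ^ (2 - 1) * -deriv q x) / 4)
        + (du * (u * (1 - q x)) + μ * (a * s * (1 - q x)))) x := by
    rw [hphi]
    exact (h₁.add h₂).add hHc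
  have hderiv : deriv (phiRS μ a q) x = -μ * x + μ ^ 2 * a * x * (1 - q x) := by
    rw [htotal.deriv, hdudef, hsdef]
    push_cast
    field_simp
    ring
  refine ⟨hderiv, fun hcrit => ?_⟩
  rw [hderiv] at hcrit
  by_cases hx : x = 0
  · exact Or.inl hx
  · right
    have h2 : x * (μ ^ 2 * a * (1 - q x) - μ) = 0 := by linear_combination hcrit
    rcases mul_eq_zero.mp h2 with h3 | h3
    · exact absurd h3 hx
    · have h4 : μ * a * (1 - q x) = 1 := by
        have h5 : μ * (μ * a * (1 - q x)) = μ * 1 := by linear_combination h3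
        exact mul_left_cancel₀ hμ.ne' h5
      have hμa : μ * a ≠ 0 := (mul_pos hμ ha).ne'
      field_simp
      linarith [h4]

end
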